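/- (Theorem 3, counting conclusion.) Let Q be a symmetric n×n real matrix, f(x) = ½⟨Qx, x⟩, h(x, y) = ⟨Qy, x − y⟩ + f(y), and K = {x ∈ {0,1}^n : Σ_{i=1}^n x_i = p} with 1 ≤ p ≤ n. Let y ∈ K with Qy ≠ 0, let LB ∈ ℝ with LB ≥ f(y), and let N be an integer with 0 ≤ N ≤ min(p, n − p) such that (LB − f(y)) / ‖Qy‖ > √(2N). Then the number of points x ∈ K satisfying h(x, y) ≤ LB is at least Σ_{q=0}^{N} binom(p, q) · binom(n − p, q). -/

import Mathlib

open Matrix BigOperators Finset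

/-- Theorem 3, counting conclusion: Under the hypotheses of Theorem 3
(`y ∈ K`, `Qy ≠ 0`, `LB ≥ f y`, `0 ≤ N ≤ min(p, n - p)` and
`(LB - f y)/‖Qy‖ > √(2N)`), the number of points `x ∈ K` with `h x y ≤ LB` is at least
`∑_{q=0}^{N} binom(p, q) · binom(n - p, q)`. -/
theorem cutting_plane_elimination_count
    (n p : ℕ) (hp : 1 ≤ p) (hpn : p ≤ n)
    (Q : Matrix (Fin n) (Fin n) ℝ) (hQ : Q.IsSymm)
    (K : Set (Fin n → ℝ))
    (hK : K = {x | (∀ i, x i = 0 ∨ x i = 1) ∧ ∑ i, x i = (p : ℝ)})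
    (f : (Fin n → ℝ) → ℝ) (hf : ∀ x, f x = (1 / 2) * (Q *ᵥ x ⬝ᵥ x))
    (h : (Fin n → ℝ) → (Fin n → ℝ) → ℝ)
    (hh : ∀ x y, h x y = Q *ᵥ y ⬝ᵥ (x - y) + f y)
    (y : Fin n → ℝ) (hy : y ∈ K) (hgrad : Q *ᵥ y ≠ 0)
    (LB : ℝ) (hLBf : f y ≤ LB)
    (N : ℕ) (hN : N ≤ min p (n - p))
    (hgap : (LB - f y) / Real.sqrt (∑ i, ((Q *ᵥ y) i) ^ 2) >
      Real.sqrt (2 * (N : ℝ))) :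
    Set.ncard {x | x ∈ K ∧ h x y ≤ LB} ≥
      ∑ q ∈ Finset.range (N + 1), p.choose q * (n - p).choose q := by
  classical
  -- indicator map
  set g : Finset (Fin n) → (Fin n → ℝ) := fun T i => if i ∈ T then 1 else 0 with hg
  have hginj : Function.Injective g := by
    intro T T' hTT
    ext i
    have := congrFun hTT i
    simp only [hg] at this
    by_cases hi : i ∈ T <;> by_cases hi' : i ∈ T' <;> simp [hi, hi'] at this ⊢
  have hgsum : ∀ T : Finset (Fin n), ∑ i, g T i = (T.card : ℝ) := by
    intro T
    simp [hg, Finset.sum_ite_mem]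
  have hgK : ∀ T : Finset (Fin n), T.card = p → g T ∈ K := by
    intro T hT
    rw [hK]
    refine ⟨fun i => ?_, by rw [hgsum, hT]⟩
    by_cases hi : i ∈ T <;> simp [hg, hi]
  -- the support of y
  set S : Finset (Fin n) := Finset.univ.filter (fun i => y i = 1) with hSdef
  have hyK := hy
  rw [hK] at hyK
  obtain ⟨hy01, hysum⟩ := hyK
  have hyS : y = g S := by
    ext i
    rcases hy01 i with h0 | h1
    · have : i ∉ S := by simp [hSdef, h0]
      simp [hg, this, h0]
    · have : i ∈ S := by simp [hSdef, h1]
      simp [hg, this, h1]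
  have hScard : S.card = p := by
    have : ∑ i, y i = (S.card : ℝ) := by rw [hyS, hgsum]
    have := this.symm.trans hysum
    exact_mod_cast this
  have hSccard : Sᶜ.card = n - p := by
    rw [Finset.card_compl, hScard]; simp
  -- positivity of the gradient norm
  set G : ℝ := Real.sqrt (∑ i, ((Q *ᵥ y) i) ^ 2) with hGdef
  have hSgpos : 0 < ∑ i, ((Q *ᵥ y) i) ^ 2 := by
    have : ∃ i, (Q *ᵥ y) i ≠ 0 := by
      by_contra hc
      push_neg at hc
      exact hgrad (funext hc)
    obtain ⟨i, hi⟩ := this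
    exact Finset.sum_pos' (fun j _ => sq_nonneg _) ⟨i, Finset.mem_univ i, by positivity⟩
  have hGpos : 0 < G := Real.sqrt_pos.mpr hSgpos
  have hgap' : G * Real.sqrt (2 * (N : ℝ)) < LB - f y := by
    rw [gt_iff_lt, lt_div_iff₀ hGpos] at hgap
    linarith [hgap]
  -- key lemma: indicator points near y satisfy the bound
  have hkey : ∀ (A B : Finset (Fin n)), A ⊆ S → B ⊆ Sᶜ → A.card ≤ N → B.card = A.card →
      h (g ((S \ A) ∪ B)) y ≤ LB := by
    intro A B hAS hBS hAN hBA
    set T : Finset (Fin n) := (S \ A) ∪ B with hTdef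
    have hdisj : ∀ i, i ∈ B → i ∉ S := by
      intro i hi; exact Finset.mem_compl.mp (hBS hi)
    -- the difference vector
    have hd2 : ∀ i, (g T i - y i) ^ 2 = if i ∈ A ∪ B then 1 else 0 := by
      intro i
      rw [hyS]
      by_cases hiA : i ∈ A
      · have hiS : i ∈ S := hAS hiA
        have hiT : i ∉ T := by
          simp only [hTdef, Finset.mem_union, Finset.mem_sdiff]
          push_neg
          exact ⟨fun _ => hiA, fun hB => absurd hiS (hdisj i hB)⟩
        simp [hg, hiT, hiS, Finset.mem_union, hiA]
      · by_cases hiB : i ∈ B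
        · have hiS : i ∉ S := hdisj i hiB
          have hiT : i ∈ T := by simp [hTdef, hiB]
          simp [hg, hiT, hiS, Finset.mem_union, hiB]
        · have : i ∈ T ↔ i ∈ S := by
            simp only [hTdef, Finset.mem_union, Finset.mem_sdiff]
            constructor
            · rintro (⟨hS, _⟩ | hB)
              · exact hS
              · exact absurd hB hiB
            · intro hS; exact Or.inl ⟨hS, hiA⟩
          by_cases hiS : i ∈ S
          · simp [hg, this.mpr hiS, hiS, Finset.mem_union, hiA, hiB]
          · have : i ∉ T := fun hT => hiS (this.mp hT)
            simp [hg, this, hiS, Finset.mem_union, hiA, hiB]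
    have hABdisj : Disjoint A B := by
      rw [Finset.disjoint_left]
      intro i hiA hiB
      exact hdisj i hiB (hAS hiA)
    have hsumd2 : ∑ i, (g T i - y i) ^ 2 = 2 * (A.card : ℝ) := by
      have : ∑ i, (g T i - y i) ^ 2 = ((A ∪ B).card : ℝ) := by
        simp_rw [hd2]
        rw [Finset.sum_ite_mem, Finset.univ_inter, Finset.sum_const, nsmul_eq_mul, mul_one]
      rw [this, Finset.card_union_of_disjoint hABdisj, hBA]
      push_cast
      ring
    -- Cauchy-Schwarz
    set d : Fin n → ℝ := fun i => g T i - y i with hddef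
    have hCS : (∑ i, (Q *ᵥ y) i * d i) ^ 2 ≤ (∑ i, ((Q *ᵥ y) i) ^ 2) * (2 * (A.card : ℝ)) := by
      calc (∑ i, (Q *ᵥ y) i * d i) ^ 2
          ≤ (∑ i, ((Q *ᵥ y) i) ^ 2) * (∑ i, d i ^ 2) :=
            Finset.sum_mul_sq_le_sq_mul_sq _ _ _
        _ = (∑ i, ((Q *ᵥ y) i) ^ 2) * (2 * (A.card : ℝ)) := by rw [← hsumd2]
    have hdot_le : ∑ i, (Q *ᵥ y) i * d i ≤ G * Real.sqrt (2 * (A.card : ℝ)) := by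
      have h1 : ∑ i, (Q *ᵥ y) i * d i ≤ Real.sqrt ((∑ i, (Q *ᵥ y) i * d i) ^ 2) := by
        rw [Real.sqrt_sq_eq_abs]; exact le_abs_self _
      have h2 : Real.sqrt ((∑ i, (Q *ᵥ y) i * d i) ^ 2)
          ≤ Real.sqrt ((∑ i, ((Q *ᵥ y) i) ^ 2) * (2 * (A.card : ℝ))) :=
        Real.sqrt_le_sqrt hCS
      have h3 : Real.sqrt ((∑ i, ((Q *ᵥ y) i) ^ 2) * (2 * (A.card : ℝ)))
          = G * Real.sqrt (2 * (A.card : ℝ)) := by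
        rw [Real.sqrt_mul (le_of_lt hSgpos)]
      linarith
    have hsqle : Real.sqrt (2 * (A.card : ℝ)) ≤ Real.sqrt (2 * (N : ℝ)) := by
      apply Real.sqrt_le_sqrt
      have : (A.card : ℝ) ≤ (N : ℝ) := by exact_mod_cast hAN
      linarith
    have hdot : ∑ i, (Q *ᵥ y) i * d i ≤ LB - f y := by
      have : G * Real.sqrt (2 * (A.card : ℝ)) ≤ G * Real.sqrt (2 * (N : ℝ)) :=
        mul_le_mul_of_nonneg_left hsqle (le_of_lt hGpos)
      linarith
    rw [hh]
    have : Q *ᵥ y ⬝ᵥ (g T - y) = ∑ i, (Q *ᵥ y) i * d i := by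
      simp [dotProduct, hddef]
    rw [this]
    linarith
  -- the family of swap sets
  set F : Finset (Finset (Fin n) × Finset (Fin n)) :=
    (Finset.range (N + 1)).biUnion
      (fun q => (S.powersetCard q) ×ˢ (Sᶜ.powersetCard q)) with hFdef
  have hFcard : F.card = ∑ q ∈ Finset.range (N + 1), p.choose q * (n - p).choose q := by
    rw [hFdef, Finset.card_biUnion]
    · apply Finset.sum_congr rfl
      intro q _
      rw [Finset.card_product, Finset.card_powersetCard, Finset.card_powersetCard,
        hScard, hSccard]
    · intro q _ q' _ hqq
      rw [Function.onFun, Finset.disjoint_left]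
      rintro ⟨A, B⟩ hAB hAB'
      rw [Finset.mem_product] at hAB hAB'
      have h1 := (Finset.mem_powersetCard.mp hAB.1).2
      have h2 := (Finset.mem_powersetCard.mp hAB'.1).2
      exact hqq (h1 ▸ h2 ▸ rfl)
  set φ : Finset (Fin n) × Finset (Fin n) → (Fin n → ℝ) :=
    fun AB => g ((S \ AB.1) ∪ AB.2) with hφdef
  have hφinj : Set.InjOn φ ↑F := by
    rintro ⟨A, B⟩ hAB ⟨A', B'⟩ hAB' hEq
    have hmem : ∀ (C D : Finset (Fin n)), (C, D) ∈ F → C ⊆ S ∧ D ⊆ Sᶜ := by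
      rintro C D hCD
      rw [hFdef, Finset.mem_biUnion] at hCD
      obtain ⟨q, _, hq⟩ := hCD
      rw [Finset.mem_product] at hq
      exact ⟨(Finset.mem_powersetCard.mp hq.1).1, (Finset.mem_powersetCard.mp hq.2).1⟩
    obtain ⟨hA, hB⟩ := hmem A B hAB
    obtain ⟨hA', hB'⟩ := hmem A' B' hAB'
    have hT : (S \ A) ∪ B = (S \ A') ∪ B' := hginj hEq
    have hrecA : ∀ (C D : Finset (Fin n)), C ⊆ S → D ⊆ Sᶜ →
        S \ ((S \ C) ∪ D) = C := by
      intro C D hC hD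
      ext i
      simp only [Finset.mem_sdiff, Finset.mem_union]
      constructor
      · rintro ⟨hiS, hi⟩
        by_contra hiC
        exact hi (Or.inl ⟨hiS, hiC⟩)
      · intro hiC
        refine ⟨hC hiC, ?_⟩
        rintro (⟨_, hnc⟩ | hD')
        · exact hnc hiC
        · exact Finset.mem_compl.mp (hD hD') (hC hiC)
    have hrecB : ∀ (C D : Finset (Fin n)), C ⊆ S → D ⊆ Sᶜ →
        ((S \ C) ∪ D) \ S = D := by
      intro C D hC hD
      ext i
      simp only [Finset.mem_sdiff, Finset.mem_union]
      constructor
      · rintro ⟨hi | hi, hiS⟩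
        · exact absurd hi.1 hiS
        · exact hi
      · intro hiD
        exact ⟨Or.inr hiD, Finset.mem_compl.mp (hD hiD)⟩
    have eq1 : A = A' := by
      rw [← hrecA A B hA hB, ← hrecA A' B' hA' hB', hT]
    have eq2 : B = B' := by
      rw [← hrecB A B hA hB, ← hrecB A' B' hA' hB', hT]
    simp [eq1, eq2]
  -- image is contained in the target set
  have hsub : ↑(F.image φ) ⊆ {x | x ∈ K ∧ h x y ≤ LB} := by
    intro x hx
    rw [Finset.coe_image] at hx
    obtain ⟨⟨A, B⟩, hAB, rfl⟩ := hx
    rw [hFdef, Finset.mem_coe, Finset.mem_biUnion] at hAB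
    obtain ⟨q, hq, hABq⟩ := hAB
    rw [Finset.mem_product] at hABq
    obtain ⟨hA, hB⟩ := hABq
    obtain ⟨hAS, hAcard⟩ := Finset.mem_powersetCard.mp hA
    obtain ⟨hBS, hBcard⟩ := Finset.mem_powersetCard.mp hB
    have hqN : q ≤ N := Nat.lt_succ_iff.mp (Finset.mem_range.mp hq)
    constructor
    · apply hgK
      have hcardAS : A.card ≤ S.card := Finset.card_le_card hAS
      rw [Finset.card_union_of_disjoint, Finset.card_sdiff_of_subset hAS, hScard, hAcard, hBcard]
      · omega
      · rw [Finset.disjoint_left]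
        intro i hi hiB
        exact Finset.mem_compl.mp (hBS hiB) (Finset.mem_sdiff.mp hi).1
    · exact hkey A B hAS hBS (hAcard ▸ hqN) (hBcard.trans hAcard.symm)
  -- finiteness of the target set
  have hfin : Set.Finite {x | x ∈ K ∧ h x y ≤ LB} := by
    apply Set.Finite.subset (Set.finite_range g)
    intro x hx
    obtain ⟨hxK, _⟩ := hx
    rw [hK] at hxK
    refine ⟨Finset.univ.filter (fun i => x i = 1), ?_⟩
    ext i
    rcases hxK.1 i with h0 | h1
    · simp [hg, h0]
    · simp [hg, h1]
  calc Set.ncard {x | x ∈ K ∧ h x y ≤ LB}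
      ≥ Set.ncard ↑(F.image φ) := Set.ncard_le_ncard hsub hfin
    _ = (F.image φ).card := Set.ncard_coe_finset _
    _ = F.card := Finset.card_image_of_injOn hφinj
    _ = ∑ q ∈ Finset.range (N + 1), p.choose q * (n - p).choose q := hFcard
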